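/- Let X be a real Hilbert space, let m ≥ 2, and for each i ∈ {1,…,m} let T_i : X → X be firmly nonexpansive. Let u be the minimal displacement vector of the composition T_m T_{m−1} ⋯ T_1 and let w be the minimal displacement vector of the cyclically shifted composition T_{m−1} ⋯ T_1 T_m. Then u belongs to the (unclosed) range of Id − T_m T_{m−1} ⋯ T_1 if and only if w belongs to the (unclosed) range of Id − T_{m−1} ⋯ T_1 T_m. -/

import Mathlib

set_option maxHeartbeats 1000000

/-- Composition `T (m-1) ∘ ⋯ ∘ T 1 ∘ T 0` applied to `x` (apply `T 0` first),
so that with `T i` playing the role of `T_{i+1}` this is `T_m T_{m-1} ⋯ T_1 x`. -/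
def compSeq {X : Type*} (m : ℕ) (T : Fin m → X → X) : X → X :=
  fun x => (List.ofFn T).foldl (fun y f => f y) x

section Aux
variable {X : Type*} [NormedAddCommGroup X] [InnerProductSpace ℝ X]

/-- Nonexpansive, and equality in nonexpansiveness forces equal displacement. -/
def IsGood (f : X → X) : Prop :=
  ∀ x y : X, ‖f x - f y‖ ≤ ‖x - y‖ ∧ (‖f x - f y‖ = ‖x - y‖ → f x - f y = x - y)

lemma isGood_of_firm {f : X → X}
    (hf : ∀ x y : X, ‖f x - f y‖ ^ 2 ≤ (inner ℝ (x - y) (f x - f y) : ℝ)) : IsGood f := by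
  intro x y
  have hcs := real_inner_le_norm (x - y) (f x - f y)
  have h1 : ‖f x - f y‖ ^ 2 ≤ ‖x - y‖ * ‖f x - f y‖ := (hf x y).trans hcs
  have hle : ‖f x - f y‖ ≤ ‖x - y‖ := by
    rcases eq_or_lt_of_le (norm_nonneg (f x - f y)) with h0 | h0
    · rw [← h0]; exact norm_nonneg _
    · nlinarith
  refine ⟨hle, fun he => ?_⟩
  have hsq : ‖x - y‖ * ‖f x - f y‖ = ‖f x - f y‖ ^ 2 := by rw [he]; ring
  have h2 : (inner ℝ (x - y) (f x - f y) : ℝ) = ‖x - y‖ * ‖f x - f y‖ :=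
    le_antisymm hcs (by rw [hsq]; exact hf x y)
  have h3 : ‖(x - y) - (f x - f y)‖ ^ 2 = 0 := by
    rw [norm_sub_sq_real, h2, he]; ring
  have h4 : (x - y) - (f x - f y) = 0 := by
    have := pow_eq_zero_iff (n := 2) (by norm_num) |>.mp h3
    exact norm_eq_zero.mp this
  exact (sub_eq_zero.mp h4).symm

omit [InnerProductSpace ℝ X] in
lemma isGood_foldl (l : List (X → X)) (h : ∀ f ∈ l, IsGood f) :
    IsGood (fun x => l.foldl (fun y f => f y) x) := by
  induction l with
  | nil => intro x y; simp
  | cons f l ih =>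
    have hf := h f (by simp)
    have hl := ih (fun g hg => h g (by simp [hg]))
    intro x y
    simp only [List.foldl_cons]
    obtain ⟨h1, h2⟩ := hl (f x) (f y)
    obtain ⟨h3, h4⟩ := hf x y
    refine ⟨h1.trans h3, fun he => ?_⟩
    have he1 : ‖f x - f y‖ = ‖x - y‖ := le_antisymm h3 (he ▸ h1)
    rw [h2 (by rw [he, ← he1]), h4 he1]

lemma exists_reg [CompleteSpace X] {N : X → X} (hN : ∀ x y : X, ‖N x - N y‖ ≤ ‖x - y‖)
    {ε : ℝ} (hε : 0 < ε) (t : X) : ∃ z : X, ε • z + (z - N z) = t := by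
  haveI : Nonempty X := ⟨0⟩
  have h1 : (0:ℝ) < 1 + ε := by linarith
  set K : NNReal := ⟨(1 + ε)⁻¹, by positivity⟩ with hK
  set g : X → X := fun z => (1 + ε)⁻¹ • (t + N z) with hg
  have hlip : LipschitzWith K g := by
    apply LipschitzWith.of_dist_le_mul
    intro a b
    simp only [hg, dist_eq_norm, ← smul_sub]
    have : (t + N a) - (t + N b) = N a - N b := by abel
    rw [this, norm_smul]
    simp only [norm_inv, Real.norm_eq_abs, abs_of_pos h1]
    have : (K : ℝ) = (1 + ε)⁻¹ := rfl
    rw [this]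
    exact mul_le_mul_of_nonneg_left (hN a b) (by positivity)
  have hc : ContractingWith K g := by
    constructor
    · rw [← NNReal.coe_lt_one]
      show (1 + ε)⁻¹ < 1
      rw [inv_lt_one_iff₀]
      right; linarith
    · exact hlip
  set z := ContractingWith.fixedPoint g hc with hzdef
  have hz : Function.IsFixedPt g z := ContractingWith.fixedPoint_isFixedPt hc
  refine ⟨z, ?_⟩
  have : (1 + ε) • z = t + N z := by
    have hfix : (1 + ε)⁻¹ • (t + N z) = z := hz
    calc (1 + ε) • z = (1 + ε) • ((1 + ε)⁻¹ • (t + N z)) := by rw [hfix]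
    _ = t + N z := by rw [smul_smul, mul_inv_cancel₀ (ne_of_gt h1), one_smul]
  calc ε • z + (z - N z) = (1 + ε) • z - N z := by
        rw [add_smul, one_smul]; abel
  _ = t := by rw [this]; abel

lemma mono_disp {N : X → X} (hN : ∀ x y : X, ‖N x - N y‖ ≤ ‖x - y‖) (p q : X) :
    (0:ℝ) ≤ inner ℝ ((p - N p) - (q - N q)) (p - q) := by
  have h1 : ((p - N p) - (q - N q)) = (p - q) - (N p - N q) := by abel
  rw [h1, inner_sub_left, real_inner_self_eq_norm_sq]
  have h2 : (inner ℝ (N p - N q) (p - q) : ℝ) ≤ ‖N p - N q‖ * ‖p - q‖ := real_inner_le_norm _ _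
  have h3 := hN p q
  nlinarith [norm_nonneg (p - q), norm_nonneg (N p - N q)]

lemma mid_mem_aux [CompleteSpace X] {N : X → X} (hN : ∀ x y : X, ‖N x - N y‖ ≤ ‖x - y‖)
    (x y : X) :
    (2:ℝ)⁻¹ • ((x - N x) + (y - N y)) ∈ closure (Set.range (fun x => x - N x)) := by
  set a := x - N x with ha
  set b := y - N y with hb
  set m0 := (2:ℝ)⁻¹ • (a + b) with hm0
  set d := (2:ℝ)⁻¹ • (b - a) with hd
  have hda : m0 - a = d := by rw [hm0, hd]; module
  have hdb : m0 - b = -d := by rw [hm0, hd]; module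
  set c := |(inner ℝ d (y - x) : ℝ)| with hc
  set p := ‖x + y‖ with hp
  have hc0 : (0:ℝ) ≤ c := abs_nonneg _
  have hp0 : (0:ℝ) ≤ p := norm_nonneg _
  rw [Metric.mem_closure_iff]
  intro δ hδ
  set ε := min (δ / (2 * (p + 1))) (δ ^ 2 / (4 * (c + 1))) with hε
  have hε0 : 0 < ε := by
    apply lt_min <;> positivity
  obtain ⟨z, hz⟩ := exists_reg hN hε0 m0
  refine ⟨z - N z, ⟨z, rfl⟩, ?_⟩
  have hr : m0 - (z - N z) = ε • z := by rw [← hz]; abel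
  rw [dist_eq_norm, hr, norm_smul, Real.norm_eq_abs, abs_of_pos hε0]
  set q := ‖z‖ with hq
  have hq0 : (0:ℝ) ≤ q := norm_nonneg _
  have h1 := mono_disp hN z x
  have h2 := mono_disp hN z y
  have hzz : z - N z = m0 - ε • z := by rw [← hz]; abel
  rw [hzz, ← ha] at h1
  rw [hzz, ← hb] at h2
  have e1 : (m0 - ε • z) - a = d - ε • z := by rw [← hda]; abel
  have e2 : (m0 - ε • z) - b = -d - ε • z := by rw [← hdb]; abel
  rw [e1] at h1
  rw [e2] at h2
  have expand : (inner ℝ (d - ε • z) (z - x) : ℝ) + (inner ℝ (-d - ε • z) (z - y) : ℝ)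
      = (inner ℝ d (y - x) : ℝ) + ε * (inner ℝ z (x + y) : ℝ) - 2 * ε * q ^ 2 := by
    rw [hq, ← real_inner_self_eq_norm_sq]
    simp only [inner_sub_left, inner_sub_right, inner_add_right, inner_neg_left,
      real_inner_smul_left]
    ring
  have hkey : 2 * ε * q ^ 2 ≤ c + ε * (q * p) := by
    have hi1 : (inner ℝ d (y - x) : ℝ) ≤ c := le_abs_self _
    have hi2 : (inner ℝ z (x + y) : ℝ) ≤ q * p := by
      have := real_inner_le_norm z (x + y)
      rw [← hq, ← hp] at this; exact this
    nlinarith [h1, h2, expand]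
  have hεp : ε * p < δ := by
    have h5 : ε ≤ δ / (2 * (p + 1)) := min_le_left _ _
    have : ε * p ≤ δ / (2 * (p + 1)) * p := by nlinarith
    have h6 : δ / (2 * (p + 1)) * p < δ := by
      rw [div_mul_eq_mul_div, div_lt_iff₀ (by positivity)]
      nlinarith
    linarith
  rcases le_or_gt q p with hqp | hqp
  · have := mul_le_mul_of_nonneg_left hqp hε0.le
    linarith
  · have h7 : ε * q ^ 2 ≤ c := by nlinarith
    have h8 : (ε * q) ^ 2 ≤ ε * c := by nlinarith
    have h9 : ε * c < δ ^ 2 / 4 := by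
      have h5 : ε ≤ δ ^ 2 / (4 * (c + 1)) := min_le_right _ _
      have : ε * c ≤ δ ^ 2 / (4 * (c + 1)) * c := by nlinarith
      have : δ ^ 2 / (4 * (c + 1)) * c < δ ^ 2 / 4 := by
        rw [div_mul_eq_mul_div, div_lt_div_iff₀ (by positivity) (by positivity)]
        nlinarith
      linarith
    nlinarith [mul_nonneg hε0.le hq0]

lemma mid_mem_closure [CompleteSpace X] {N : X → X} (hN : ∀ x y : X, ‖N x - N y‖ ≤ ‖x - y‖)
    {a b : X} (ha : a ∈ Set.range (fun x => x - N x))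
    (hb : b ∈ closure (Set.range (fun x => x - N x))) :
    (2:ℝ)⁻¹ • (a + b) ∈ closure (Set.range (fun x => x - N x)) := by
  have hcont : Continuous fun z : X => (2:ℝ)⁻¹ • (a + z) :=
    (continuous_const.add continuous_id).const_smul _
  have hcl : IsClosed ((fun z : X => (2:ℝ)⁻¹ • (a + z)) ⁻¹'
      closure (Set.range (fun x => x - N x))) := isClosed_closure.preimage hcont
  have hsub : Set.range (fun x => x - N x) ⊆
      (fun z : X => (2:ℝ)⁻¹ • (a + z)) ⁻¹' closure (Set.range (fun x => x - N x)) := by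
    rintro _ ⟨y, rfl⟩
    obtain ⟨x, hx⟩ := ha
    have := mid_mem_aux hN x y
    simp only [Set.mem_preimage]
    rw [← hx]
    exact this
  exact closure_minimal hsub hcl hb

lemma min_norm_unique [CompleteSpace X] {N : X → X} (hN : ∀ x y : X, ‖N x - N y‖ ≤ ‖x - y‖)
    {a b : X} (ha : a ∈ Set.range (fun x => x - N x))
    (hb : b ∈ closure (Set.range (fun x => x - N x)))
    (hab : ‖a‖ = ‖b‖)
    (hmin : ∀ z ∈ closure (Set.range (fun x => x - N x)), ‖b‖ ≤ ‖z‖) : a = b := by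
  have hm := mid_mem_closure hN ha hb
  have h1 := hmin _ hm
  have h2 : ‖(2:ℝ)⁻¹ • (a + b)‖ = 2⁻¹ * ‖a + b‖ := by
    rw [norm_smul]; norm_num
  rw [h2] at h1
  have hadd := norm_add_sq_real a b
  have hsubq := norm_sub_sq_real a b
  have h3 : a - b = 0 := by
    have hn : ‖a - b‖ ^ 2 ≤ 0 := by nlinarith [norm_nonneg (a + b), norm_nonneg b]
    have : ‖a - b‖ ^ 2 = 0 := le_antisymm hn (by positivity)
    exact norm_eq_zero.mp (pow_eq_zero_iff (n := 2) (by norm_num) |>.mp this)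
  exact sub_eq_zero.mp h3

end Aux

theorem stmt_7 {X : Type*} [NormedAddCommGroup X] [InnerProductSpace ℝ X] [CompleteSpace X]
    (m : ℕ) (hm : 2 ≤ m) (T : Fin m → X → X)
    (hT : ∀ i, ∀ x y : X, ‖T i x - T i y‖ ^ 2 ≤ (inner ℝ (x - y) (T i x - T i y) : ℝ))
    (u w : X)
    (hu : u ∈ closure (Set.range (fun x => x - compSeq m T x)))
    (humin : ∀ z ∈ closure (Set.range (fun x => x - compSeq m T x)), ‖u‖ ≤ ‖z‖)
    -- `w` is the minimal displacement vector of `T_{m-1} ⋯ T_1 T_m`,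
    -- the cyclic shift which applies `T_m` first:
    (hw : w ∈ closure (Set.range (fun x => x - compSeq m (fun j => T (j - ⟨1, by omega⟩)) x)))
    (hwmin : ∀ z ∈ closure
        (Set.range (fun x => x - compSeq m (fun j => T (j - ⟨1, by omega⟩)) x)), ‖w‖ ≤ ‖z‖) :
    u ∈ Set.range (fun x => x - compSeq m T x) ↔
      w ∈ Set.range (fun x => x - compSeq m (fun j => T (j - ⟨1, by omega⟩)) x) := by
  obtain ⟨k, rfl⟩ : ∃ k, m = k + 1 := ⟨m - 1, by omega⟩
  have hk : 1 ≤ k := by omega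
  set F : Fin (k + 1) → X → X := fun j => T (j - ⟨1, by omega⟩) with hF
  set B : X → X := T (Fin.last k) with hB
  set L : List (X → X) := List.ofFn (fun j : Fin k => T j.castSucc) with hL
  set A : X → X := fun x => L.foldl (fun y f => f y) x with hA
  -- decomposition of the two compositions
  have hS : ∀ x : X, compSeq (k + 1) T x = B (A x) := by
    intro x
    show (List.ofFn T).foldl (fun y f => f y) x = _
    rw [List.ofFn_succ', List.concat_eq_append, List.foldl_append]
    rfl
  have hS' : ∀ x : X, compSeq (k + 1) F x = A (B x) := by
    intro x
    show (List.ofFn F).foldl (fun y f => f y) x = _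
    rw [List.ofFn_succ, List.foldl_cons]
    have h0 : F 0 = B := by
      show T ((0 : Fin (k + 1)) - ⟨1, by omega⟩) = T (Fin.last k)
      have e : ((0 : Fin (k + 1)) - ⟨1, by omega⟩) = Fin.last k := by
        rw [Fin.ext_iff]
        simp only [Fin.sub_def, Fin.val_zero, Fin.val_last]
        have h1 : k + 1 - 1 + 0 = k := by omega
        rw [h1, Nat.mod_eq_of_lt (by omega)]
      rw [e]
    have hfn : (List.ofFn fun i : Fin k => F i.succ) = L := by
      rw [hL]
      congr 1
      funext i
      show T ((i.succ : Fin (k + 1)) - ⟨1, by omega⟩) = T i.castSucc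
      have e : ((i.succ : Fin (k + 1)) - ⟨1, by omega⟩) = i.castSucc := by
        rw [Fin.ext_iff]
        simp only [Fin.sub_def, Fin.val_succ, Fin.coe_castSucc]
        have h1 : k + 1 - 1 + ((i : ℕ) + 1) = (i : ℕ) + (k + 1) := by omega
        rw [h1, Nat.add_mod_right, Nat.mod_eq_of_lt (by omega)]
      rw [e]
    rw [h0, hfn]
  -- goodness
  have hGB : IsGood B := isGood_of_firm (hT _)
  have hGA : IsGood A := by
    rw [hA]
    apply isGood_foldl
    intro f hf
    rw [hL, List.mem_ofFn] at hf
    obtain ⟨j, rfl⟩ := hf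
    exact isGood_of_firm (hT _)
  -- nonexpansiveness of the two compositions
  have hNS : ∀ x y : X, ‖compSeq (k + 1) T x - compSeq (k + 1) T y‖ ≤ ‖x - y‖ := by
    intro x y
    rw [hS x, hS y]
    exact ((hGB (A x) (A y)).1).trans (hGA x y).1
  have hNS' : ∀ x y : X, ‖compSeq (k + 1) F x - compSeq (k + 1) F y‖ ≤ ‖x - y‖ := by
    intro x y
    rw [hS' x, hS' y]
    exact ((hGA (B x) (B y)).1).trans (hGB x y).1
  -- ‖w‖ ≤ ‖u‖
  have hwu : ‖w‖ ≤ ‖u‖ := by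
    have hsub : Set.range (fun x => x - compSeq (k + 1) T x) ⊆ {z : X | ‖w‖ ≤ ‖z‖} := by
      rintro _ ⟨x, rfl⟩
      have hmem : A x - compSeq (k + 1) F (A x) ∈
          Set.range (fun x => x - compSeq (k + 1) F x) := ⟨A x, rfl⟩
      have h1 := hwmin _ (subset_closure hmem)
      have h2 : A x - compSeq (k + 1) F (A x)
          = A x - A (compSeq (k + 1) T x) := by rw [hS' (A x), hS x]
      have h3 := (hGA x (compSeq (k + 1) T x)).1
      rw [h2] at h1
      exact h1.trans h3
    have hcl : IsClosed {z : X | ‖w‖ ≤ ‖z‖} :=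
      isClosed_le continuous_const continuous_norm
    exact closure_minimal hsub hcl hu
  have huw : ‖u‖ ≤ ‖w‖ := by
    have hsub : Set.range (fun x => x - compSeq (k + 1) F x)
        ⊆ {z : X | ‖u‖ ≤ ‖z‖} := by
      rintro _ ⟨x, rfl⟩
      have hmem : B x - compSeq (k + 1) T (B x) ∈
          Set.range (fun x => x - compSeq (k + 1) T x) := ⟨B x, rfl⟩
      have h1 := humin _ (subset_closure hmem)
      have h2 : B x - compSeq (k + 1) T (B x)
          = B x - B (compSeq (k + 1) F x) := by
        rw [hS (B x), hS' x]
      have h3 := (hGB x (compSeq (k + 1) F x)).1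
      rw [h2] at h1
      exact h1.trans h3
    have hcl : IsClosed {z : X | ‖u‖ ≤ ‖z‖} :=
      isClosed_le continuous_const continuous_norm
    exact closure_minimal hsub hcl hw
  have huweq : ‖u‖ = ‖w‖ := le_antisymm huw hwu
  constructor
  · rintro ⟨x, hx⟩
    have hx' : x - compSeq (k + 1) T x = u := hx
    have hSx : compSeq (k + 1) T x = x - u := by rw [← hx']; abel
    have hmem : A x - A (x - u) ∈ Set.range (fun z => z - compSeq (k + 1) F z) :=
      ⟨A x, by show A x - compSeq (k + 1) F (A x) = A x - A (x - u)
               rw [hS' (A x), ← hS x, hSx]⟩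
    have hxu : x - (x - u) = u := by abel
    have h1 : ‖A x - A (x - u)‖ ≤ ‖x - (x - u)‖ := (hGA x (x - u)).1
    rw [hxu] at h1
    have h2 := hwmin _ (subset_closure hmem)
    have heq : ‖A x - A (x - u)‖ = ‖x - (x - u)‖ := by
      rw [hxu]
      refine le_antisymm h1 ?_
      rw [huweq]
      exact h2
    have h3 := (hGA x (x - u)).2 heq
    rw [hxu] at h3
    rw [h3] at hmem
    have := min_norm_unique hNS' hmem hw huweq hwmin
    rw [← this]
    exact hmem
  · rintro ⟨x, hx⟩
    have hx' : x - compSeq (k + 1) F x = w := hx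
    have hSx : compSeq (k + 1) F x = x - w := by rw [← hx']; abel
    have hmem : B x - B (x - w) ∈ Set.range (fun z => z - compSeq (k + 1) T z) :=
      ⟨B x, by show B x - compSeq (k + 1) T (B x) = B x - B (x - w)
               rw [hS (B x), ← hS' x, hSx]⟩
    have hxw : x - (x - w) = w := by abel
    have h1 : ‖B x - B (x - w)‖ ≤ ‖x - (x - w)‖ := (hGB x (x - w)).1
    rw [hxw] at h1
    have h2 := humin _ (subset_closure hmem)
    have heq : ‖B x - B (x - w)‖ = ‖x - (x - w)‖ := by
      rw [hxw]
      refine le_antisymm h1 ?_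
      rw [← huweq]
      exact h2
    have h3 := (hGB x (x - w)).2 heq
    rw [hxw] at h3
    rw [h3] at hmem
    have := min_norm_unique hNS hmem hu huweq.symm humin
    rw [← this]
    exact hmem
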